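/- (Proposition 3, multi-dimensional version.) Let θ ∈ [0,1] be real, D a positive integer, N_1,…,N_D positive integers, and fix d' ∈ {1,…,D}. Let Y have dimension sizes M_d with M_d = N_d for d ≠ d' and M_{d'} = N_{d'}+1, and let X be embedded in Y agreeing in all dimensions d ≠ d' and, in dimension d', consisting either of the first N_{d'} positions or of the last N_{d'} positions. Sample a candidate patch on Y from the product over d of original-construction candidate-patch distributions on sizes M_d, and let π restrict it coordinatewise to X (in each dimension keeping the part of the interval {s_d,…,s_d+l_d−1} lying in X, re-indexed to {1,…,N_d}). Then for every D-tuple of pairs (s_d^X, l_d^X) with 1 ≤ s_d^X ≤ N_d and 1 ≤ l_d^X ≤ N_d−s_d^X+1 for all d: P_Y(π^{-1} of this patch | the restriction to X is nonempty in every dimension) = P_X(this patch | all side-lengths are positive), where P_X is the product over d of original-construction candidate-patch distributions on sizes N_d. -/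

import Mathlib

/-- Initial-position factor `c`: `c θ 1 = 1`, `c θ s = 1 - θ` for `s ≥ 2`. -/
noncomputable def c (θ : ℝ) (s : ℕ) : ℝ := if s = 1 then 1 else 1 - θ

/-- Truncated geometric side-length distribution on dimension size `N` given start `s`. -/
noncomputable def q (θ : ℝ) (N s l : ℕ) : ℝ :=
  if l = N - s + 1 then θ ^ (N - s) else θ ^ (l - 1) * (1 - θ)

/-- Conditional law of the side-length `l` given the start `s` in the original construction. -/
noncomputable def condL (θ : ℝ) (N s l : ℕ) : ℝ :=
  if l = 0 then (if s = 1 then 0 else θ) else c θ s * q θ N s l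

/-- The original-construction candidate-patch distribution on dimension size `N`. -/
noncomputable def origP (θ : ℝ) (N : ℕ) (p : ℕ × ℕ) : ℝ :=
  if 1 ≤ p.1 ∧ p.1 ≤ N ∧ p.2 ≤ N - p.1 + 1 then (1 / (N : ℝ)) * condL θ N p.1 p.2 else 0

open Finset

section Helpers

lemma geom_aux (θ : ℝ) (k : ℕ) : ∑ l ∈ Icc 1 k, θ ^ (l - 1) * (1 - θ) = 1 - θ ^ k := by
  have h : ∑ l ∈ Icc 1 k, θ ^ (l - 1) * (1 - θ)
      = ∑ j ∈ range k, θ ^ j * (1 - θ) := by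
    rw [show Icc 1 k = Ico 1 (k+1) by rfl]
    rw [Finset.sum_Ico_eq_sum_range]
    simp
  rw [h, ← Finset.sum_mul, ← neg_sub θ 1, mul_neg, geom_sum_mul, neg_sub]

lemma qsum (θ : ℝ) {N s : ℕ} (h1 : 1 ≤ s) (h2 : s ≤ N) :
    ∑ l ∈ Icc 1 (N - s + 1), q θ N s l = 1 := by
  rw [show N - s + 1 = (N - s) + 1 by rfl, Finset.sum_Icc_succ_top (by omega)]
  have h : ∀ l ∈ Icc 1 (N - s), q θ N s l = θ ^ (l - 1) * (1 - θ) := by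
    intro l hl
    simp only [mem_Icc] at hl
    rw [q, if_neg (by omega)]
  rw [Finset.sum_congr rfl h, geom_aux, q, if_pos rfl]
  ring

lemma origP_eq (θ : ℝ) {N s l : ℕ} (h1 : 1 ≤ s) (h2 : s ≤ N) (h3 : 1 ≤ l)
    (h4 : l ≤ N - s + 1) :
    origP θ N (s, l) = (1 / (N : ℝ)) * (c θ s * q θ N s l) := by
  rw [origP, if_pos ⟨h1, h2, h4⟩, condL, if_neg (by omega)]

lemma origP_zero (θ : ℝ) {N s l : ℕ} (h : ¬(1 ≤ s ∧ s ≤ N ∧ l ≤ N - s + 1)) :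
    origP θ N (s, l) = 0 := by
  rw [origP, if_neg h]

lemma rowSum (θ : ℝ) {M s : ℕ} (h1 : 1 ≤ s) (h2 : s ≤ M) :
    ∑ l ∈ Icc 1 M, origP θ M (s, l) = (1 / (M : ℝ)) * c θ s := by
  rw [← Finset.sum_subset (Finset.Icc_subset_Icc le_rfl (by omega : M - s + 1 ≤ M))
    (fun l hl hl2 => by
      simp only [mem_Icc] at hl hl2
      exact origP_zero θ (by omega))]
  have h : ∀ l ∈ Icc 1 (M - s + 1), origP θ M (s, l) = (1 / (M : ℝ)) * (c θ s * q θ M s l) := by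
    intro l hl
    simp only [mem_Icc] at hl
    exact origP_eq θ h1 h2 hl.1 hl.2
  rw [Finset.sum_congr rfl h, ← Finset.mul_sum, ← Finset.mul_sum, qsum θ h1 h2, mul_one]

lemma csum (θ : ℝ) {M : ℕ} (hM : 1 ≤ M) :
    ∑ s ∈ Icc 1 M, c θ s = 1 + ((M : ℝ) - 1) * (1 - θ) := by
  have h : Icc 1 M = insert 1 (Icc 2 M) := by
    ext x; simp [mem_Icc, mem_insert]; omega
  rw [h, Finset.sum_insert (by simp), c, if_pos rfl]
  have h2 : ∀ s ∈ Icc 2 M, c θ s = 1 - θ := fun s hs => by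
    simp only [mem_Icc] at hs; rw [c, if_neg (by omega)]
  rw [Finset.sum_congr rfl h2, Finset.sum_const, Nat.card_Icc]
  have h3 : ((M + 1 - 2 : ℕ) : ℝ) = (M : ℝ) - 1 := by
    have : ((M - 1 : ℕ) : ℝ) = (M : ℝ) - 1 := by
      push_cast [Nat.cast_sub hM]; ring
    rw [show M + 1 - 2 = M - 1 by omega, this]
  rw [nsmul_eq_mul, h3]

lemma qstep (θ : ℝ) {N l : ℕ} (hl1 : 1 ≤ l) (hlN : l ≤ N) :
    q θ (N + 1) 1 (l + 1) = θ * q θ N 1 l := by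
  have e1 : (N + 1 : ℕ) - 1 + 1 = N + 1 := by omega
  have e2 : N - 1 + 1 = N := by omega
  rw [q, q, e1, e2]
  by_cases h : l = N
  · rw [if_pos (by omega), if_pos h, show (N + 1 : ℕ) - 1 = (N - 1) + 1 by omega,
      pow_succ]
    ring
  · rw [if_neg (by omega), if_neg h, show (l + 1) - 1 = (l - 1) + 1 by omega, pow_succ]
    ring

lemma qshift (θ : ℝ) {N s l : ℕ} (hs : s ≤ N) : q θ (N + 1) (s + 1) l = q θ N s l := by
  rw [q, q, show (N + 1 : ℕ) - (s + 1) = N - s by omega]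

lemma numInit (θ : ℝ) {N s l : ℕ} (hs1 : 1 ≤ s) (hsN : s ≤ N) (hl1 : 1 ≤ l)
    (hlN : l ≤ N - s + 1) :
    ∑ p ∈ Icc 1 (N + 1) ×ˢ Icc 0 (N + 1),
      (if (1 ≤ p.2 ∧ p.1 ≤ N) ∧ (p.1 = s ∧ min p.2 (N - p.1 + 1) = l)
       then origP θ (N + 1) p else 0)
    = ((N : ℝ) / ((N : ℝ) + 1)) * origP θ N (s, l) := by
  have hN0 : (N : ℝ) ≠ 0 := Nat.cast_ne_zero.2 (by omega)
  have hN1 : (N : ℝ) + 1 ≠ 0 := by positivity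
  by_cases htop : l = N - s + 1
  · subst htop
    have hab : ((s, N - s + 1) : ℕ × ℕ) ≠ (s, N - s + 2) := by
      simp
    have hsub : ({(s, N - s + 1), (s, N - s + 2)} : Finset (ℕ × ℕ))
        ⊆ Icc 1 (N + 1) ×ˢ Icc 0 (N + 1) := by
      intro p hp
      simp only [mem_insert, mem_singleton] at hp
      rcases hp with h | h <;> subst h <;>
        simp [Finset.mem_product, mem_Icc] <;> omega
    rw [← Finset.sum_subset hsub (fun p hp hnp => by
      simp only [mem_insert, mem_singleton, not_or] at hnp
      simp only [Finset.mem_product, mem_Icc] at hp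
      by_cases hc : (1 ≤ p.2 ∧ p.1 ≤ N) ∧ (p.1 = s ∧ min p.2 (N - p.1 + 1) = N - s + 1)
      · rw [if_pos hc]
        have hp1 : p.1 = s := hc.2.1
        have hp2 : N - s + 3 ≤ p.2 := by
          rcases hc with ⟨⟨h1, h2⟩, ⟨h3, h4⟩⟩
          have := Prod.ext_iff.not.1 hnp.1
          have := Prod.ext_iff.not.1 hnp.2
          simp [hp1] at *
          omega
        have := origP_zero (N := N + 1) (s := p.1) (l := p.2) θ (by omega)
        rw [← this]
      · rw [if_neg hc])]
    rw [Finset.sum_pair hab]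
    rw [if_pos (by constructor <;> constructor <;> simp <;> omega)]
    rw [if_pos (by constructor <;> constructor <;> simp <;> omega)]
    rw [origP_eq θ hs1 (by omega) (by omega) (by omega),
        origP_eq θ hs1 (by omega) (by omega) (by omega),
        origP_eq θ hs1 hsN (by omega) le_rfl]
    rw [q, if_neg (by omega), q, if_pos (by omega), q, if_pos rfl]
    have e1 : (N + 1 : ℕ) - s = (N - s) + 1 := by omega
    have e2 : ((N + 1 : ℕ) : ℝ) = (N : ℝ) + 1 := by push_cast; ring
    have e3 : (N - s + 1) - 1 = N - s := by omega
    rw [e1, e2, e3, pow_succ]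
    field_simp
    ring
  · rw [Finset.sum_eq_single_of_mem (s, l)
      (by simp [Finset.mem_product, mem_Icc]; omega)
      (fun p hp hne => by
        by_cases hc : (1 ≤ p.2 ∧ p.1 ≤ N) ∧ (p.1 = s ∧ min p.2 (N - p.1 + 1) = l)
        · exfalso
          rcases hc with ⟨⟨h1, h2⟩, ⟨h3, h4⟩⟩
          apply hne
          have : p.2 = l := by simp [h3] at h4; omega
          exact Prod.ext h3 this
        · rw [if_neg hc])]
    rw [if_pos (by constructor <;> constructor <;> simp <;> omega)]
    rw [origP_eq θ hs1 (by omega) hl1 (by omega),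
        origP_eq θ hs1 hsN hl1 hlN]
    rw [q, if_neg (by omega), q, if_neg htop]
    have e2 : ((N + 1 : ℕ) : ℝ) = (N : ℝ) + 1 := by push_cast; ring
    rw [e2]
    field_simp

lemma numTerm (θ : ℝ) {N s l : ℕ} (hs1 : 1 ≤ s) (hsN : s ≤ N) (hl1 : 1 ≤ l)
    (hlN : l ≤ N - s + 1) :
    ∑ p ∈ Icc 1 (N + 1) ×ˢ Icc 0 (N + 1),
      (if (1 ≤ p.2 ∧ 2 ≤ p.1 + p.2 - 1) ∧ (max p.1 2 - 1 = s ∧ p.1 + p.2 - max p.1 2 = l)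
       then origP θ (N + 1) p else 0)
    = ((N : ℝ) / ((N : ℝ) + 1)) * origP θ N (s, l) := by
  have hN0 : (N : ℝ) ≠ 0 := Nat.cast_ne_zero.2 (by omega)
  have e2 : ((N + 1 : ℕ) : ℝ) = (N : ℝ) + 1 := by push_cast; ring
  by_cases hs2 : 2 ≤ s
  · rw [Finset.sum_eq_single_of_mem (s + 1, l)
      (by simp [Finset.mem_product, mem_Icc]; omega)
      (fun p hp hne => by
        by_cases hc : (1 ≤ p.2 ∧ 2 ≤ p.1 + p.2 - 1) ∧
            (max p.1 2 - 1 = s ∧ p.1 + p.2 - max p.1 2 = l)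
        · exfalso
          rcases hc with ⟨⟨h1, h2⟩, ⟨h3, h4⟩⟩
          apply hne
          have hp1 : p.1 = s + 1 := by omega
          exact Prod.ext hp1 (by omega)
        · rw [if_neg hc])]
    rw [if_pos (by constructor <;> constructor <;> simp <;> omega)]
    rw [origP_eq θ (by omega) (by omega) hl1 (by omega),
        origP_eq θ hs1 hsN hl1 hlN, qshift θ hsN, e2]
    have hc : c θ (s + 1) = c θ s := by rw [c, c, if_neg (by omega), if_neg (by omega)]
    rw [hc]
    field_simp
  · have hs : s = 1 := by omega
    subst hs
    have hab : ((2, l) : ℕ × ℕ) ≠ (1, l + 1) := by simp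
    have hsub : ({(2, l), (1, l + 1)} : Finset (ℕ × ℕ))
        ⊆ Icc 1 (N + 1) ×ˢ Icc 0 (N + 1) := by
      intro p hp
      simp only [mem_insert, mem_singleton] at hp
      rcases hp with h | h <;> subst h <;>
        simp [Finset.mem_product, mem_Icc] <;> omega
    rw [← Finset.sum_subset hsub (fun p hp hnp => by
      simp only [mem_insert, mem_singleton, not_or] at hnp
      simp only [Finset.mem_product, mem_Icc] at hp
      by_cases hc : (1 ≤ p.2 ∧ 2 ≤ p.1 + p.2 - 1) ∧
          (max p.1 2 - 1 = 1 ∧ p.1 + p.2 - max p.1 2 = l)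
      · exfalso
        rcases hc with ⟨⟨h1, h2⟩, ⟨h3, h4⟩⟩
        have hn1 := Prod.ext_iff.not.1 hnp.1
        have hn2 := Prod.ext_iff.not.1 hnp.2
        simp at hn1 hn2
        omega
      · rw [if_neg hc])]
    rw [Finset.sum_pair hab]
    rw [if_pos (by constructor <;> constructor <;> simp <;> omega)]
    rw [if_pos (by constructor <;> constructor <;> simp <;> omega)]
    have h2l : origP θ (N + 1) (2, l) = (1 / ((N : ℝ) + 1)) * ((1 - θ) * q θ N 1 l) := by
      rw [origP_eq θ (by omega) (by omega) hl1 (by omega), qshift θ (by omega), e2, c,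
        if_neg (by omega)]
    have h1l : origP θ (N + 1) (1, l + 1)
        = (1 / ((N : ℝ) + 1)) * (θ * q θ N 1 l) := by
      rw [origP_eq θ (by omega) (by omega) (by omega) (by omega), e2,
        qstep θ hl1 (by omega), c, if_pos rfl]
      ring
    rw [h2l, h1l, origP_eq θ le_rfl hsN hl1 hlN, c, if_pos rfl]
    field_simp
    ring

lemma single (θ : ℝ) {N : ℕ} (g : ℕ × ℕ)
    (hg : 1 ≤ g.1 ∧ g.1 ≤ N ∧ 1 ≤ g.2 ∧ g.2 ≤ N - g.1 + 1) :
    ∑ p ∈ Icc 1 N ×ˢ Icc 0 N, (if 1 ≤ p.2 ∧ p = g then origP θ N p else 0)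
      = origP θ N g := by
  rw [Finset.sum_eq_single_of_mem g
    (by simp [Finset.mem_product, mem_Icc]; omega)
    (fun p hp hne => by rw [if_neg (fun hc => hne hc.2)])]
  rw [if_pos ⟨hg.2.2.1, rfl⟩]

noncomputable def T (θ : ℝ) (N : ℕ) : ℝ := ∑ p ∈ Icc 1 N ×ˢ Icc 1 N, origP θ N p

lemma T_eq (θ : ℝ) {N : ℕ} (hN : 1 ≤ N) :
    T θ N = (1 / (N : ℝ)) * (1 + ((N : ℝ) - 1) * (1 - θ)) := by
  rw [T, Finset.sum_product]
  rw [Finset.sum_congr rfl (fun s hs => by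
    simp only [mem_Icc] at hs
    exact rowSum θ hs.1 hs.2)]
  rw [← Finset.mul_sum, csum θ hN]

lemma den_nonbd (θ : ℝ) {N : ℕ} :
    ∑ p ∈ Icc 1 N ×ˢ Icc 0 N, (if 1 ≤ p.2 then origP θ N p else 0) = T θ N := by
  have key : ∑ p ∈ Icc 1 N ×ˢ Icc 1 N, (if 1 ≤ p.2 then origP θ N p else 0)
      = ∑ p ∈ Icc 1 N ×ˢ Icc 0 N, (if 1 ≤ p.2 then origP θ N p else 0) :=
    Finset.sum_subset
      (Finset.product_subset_product_right (Finset.Icc_subset_Icc (by omega) le_rfl))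
      (fun p hp hnp => by
        simp only [Finset.mem_product, mem_Icc] at hp hnp
        rw [if_neg (show ¬(1 ≤ p.2) by omega)])
  rw [T, ← key]
  exact Finset.sum_congr rfl (fun p hp => by
    simp only [Finset.mem_product, mem_Icc] at hp
    rw [if_pos hp.2.1])

lemma denInit (θ : ℝ) {N : ℕ} (hN : 1 ≤ N) :
    ∑ p ∈ Icc 1 (N + 1) ×ˢ Icc 0 (N + 1),
      (if 1 ≤ p.2 ∧ p.1 ≤ N then origP θ (N + 1) p else 0)
    = (1 / ((N : ℝ) + 1)) * (1 + ((N : ℝ) - 1) * (1 - θ)) := by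
  have e2 : ((N + 1 : ℕ) : ℝ) = (N : ℝ) + 1 := by push_cast; ring
  rw [Finset.sum_product]
  have hrow : ∀ s ∈ Icc 1 (N + 1),
      ∑ l ∈ Icc 0 (N + 1), (if 1 ≤ l ∧ s ≤ N then origP θ (N + 1) (s, l) else 0)
      = if s ≤ N then (1 / ((N : ℝ) + 1)) * c θ s else 0 := by
    intro s hs
    simp only [mem_Icc] at hs
    by_cases hsN : s ≤ N
    · rw [if_pos hsN, ← e2, ← rowSum θ hs.1 (by omega : s ≤ N + 1)]
      have key : ∑ l ∈ Icc 1 (N + 1), (if 1 ≤ l ∧ s ≤ N then origP θ (N + 1) (s, l) else 0)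
          = ∑ l ∈ Icc 0 (N + 1), (if 1 ≤ l ∧ s ≤ N then origP θ (N + 1) (s, l) else 0) :=
        Finset.sum_subset (Finset.Icc_subset_Icc (by omega) le_rfl)
          (fun l hl hnl => by
            simp only [mem_Icc] at hl hnl
            rw [if_neg (show ¬(1 ≤ l ∧ s ≤ N) by omega)])
      rw [← key]
      exact Finset.sum_congr rfl (fun l hl => by
        simp only [mem_Icc] at hl
        rw [if_pos ⟨hl.1, hsN⟩])
    · rw [if_neg hsN]
      exact Finset.sum_eq_zero (fun l _ => by rw [if_neg (by omega)])
  rw [Finset.sum_congr rfl hrow]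
  have key : ∑ s ∈ Icc 1 N, (if s ≤ N then (1 / ((N : ℝ) + 1)) * c θ s else 0)
      = ∑ s ∈ Icc 1 (N + 1), (if s ≤ N then (1 / ((N : ℝ) + 1)) * c θ s else 0) :=
    Finset.sum_subset (Finset.Icc_subset_Icc le_rfl (by omega : N ≤ N + 1))
      (fun s hsmem hs => by
        simp only [mem_Icc] at hsmem hs
        rw [if_neg (show ¬(s ≤ N) by omega)])
  rw [← key]
  rw [Finset.sum_congr rfl (fun s hs => by
    simp only [mem_Icc] at hs
    rw [if_pos hs.2]), ← Finset.mul_sum, csum θ hN]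

lemma denTerm (θ : ℝ) {N : ℕ} (hN : 1 ≤ N) :
    ∑ p ∈ Icc 1 (N + 1) ×ˢ Icc 0 (N + 1),
      (if 1 ≤ p.2 ∧ 2 ≤ p.1 + p.2 - 1 then origP θ (N + 1) p else 0)
    = (1 / ((N : ℝ) + 1)) * (1 + ((N : ℝ) - 1) * (1 - θ)) := by
  have e2 : ((N + 1 : ℕ) : ℝ) = (N : ℝ) + 1 := by push_cast; ring
  rw [Finset.sum_product]
  have hrow : ∀ s ∈ Icc 1 (N + 1),
      ∑ l ∈ Icc 0 (N + 1), (if 1 ≤ l ∧ 2 ≤ s + l - 1 then origP θ (N + 1) (s, l) else 0)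
      = if s = 1 then (1 / ((N : ℝ) + 1)) * θ else (1 / ((N : ℝ) + 1)) * (1 - θ) := by
    intro s hs
    simp only [mem_Icc] at hs
    by_cases hs1 : s = 1
    · subst hs1
      rw [if_pos rfl]
      have h1 : ∑ l ∈ Icc 0 (N + 1), (if 1 ≤ l ∧ 2 ≤ 1 + l - 1 then origP θ (N + 1) (1, l) else 0)
          = ∑ l ∈ Icc 2 (N + 1), origP θ (N + 1) (1, l) := by
        have key : ∑ l ∈ Icc 2 (N + 1),
              (if 1 ≤ l ∧ 2 ≤ 1 + l - 1 then origP θ (N + 1) (1, l) else 0)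
            = ∑ l ∈ Icc 0 (N + 1),
              (if 1 ≤ l ∧ 2 ≤ 1 + l - 1 then origP θ (N + 1) (1, l) else 0) :=
          Finset.sum_subset (Finset.Icc_subset_Icc (by omega) le_rfl)
            (fun l hl hnl => by
              simp only [mem_Icc] at hl hnl
              rw [if_neg (show ¬(1 ≤ l ∧ 2 ≤ 1 + l - 1) by omega)])
        rw [← key]
        exact Finset.sum_congr rfl (fun l hl => by
          simp only [mem_Icc] at hl
          rw [if_pos (by omega)])
      rw [h1]
      have hins : Icc 1 (N + 1) = insert 1 (Icc 2 (N + 1)) := by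
        ext x; simp [mem_Icc]; omega
      have hrs := rowSum θ (le_rfl : 1 ≤ 1) (by omega : 1 ≤ N + 1)
      rw [hins, Finset.sum_insert (by simp)] at hrs
      have h11 : origP θ (N + 1) (1, 1) = (1 / ((N : ℝ) + 1)) * (1 - θ) := by
        rw [origP_eq θ le_rfl (by omega) le_rfl (by omega), e2, c, if_pos rfl, q,
          if_neg (by omega)]
        ring
      have hc1 : c θ 1 = 1 := by rw [c, if_pos rfl]
      rw [h11, e2, hc1] at hrs
      have h2 : ∑ l ∈ Icc 2 (N + 1), origP θ (N + 1) (1, l)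
          = (1 / ((N : ℝ) + 1)) * 1 - (1 / ((N : ℝ) + 1)) * (1 - θ) := by
        linarith [hrs]
      rw [h2]; ring
    · rw [if_neg hs1]
      have h1 : ∑ l ∈ Icc 0 (N + 1), (if 1 ≤ l ∧ 2 ≤ s + l - 1 then origP θ (N + 1) (s, l) else 0)
          = ∑ l ∈ Icc 1 (N + 1), origP θ (N + 1) (s, l) := by
        have key : ∑ l ∈ Icc 1 (N + 1),
              (if 1 ≤ l ∧ 2 ≤ s + l - 1 then origP θ (N + 1) (s, l) else 0)
            = ∑ l ∈ Icc 0 (N + 1),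
              (if 1 ≤ l ∧ 2 ≤ s + l - 1 then origP θ (N + 1) (s, l) else 0) :=
          Finset.sum_subset (Finset.Icc_subset_Icc (by omega) le_rfl)
            (fun l hl hnl => by
              simp only [mem_Icc] at hl hnl
              rw [if_neg (show ¬(1 ≤ l ∧ 2 ≤ s + l - 1) by omega)])
        rw [← key]
        exact Finset.sum_congr rfl (fun l hl => by
          simp only [mem_Icc] at hl
          rw [if_pos (by omega)])
      rw [h1, rowSum θ hs.1 hs.2, e2, c, if_neg hs1]
  rw [Finset.sum_congr rfl hrow]
  have hins : Icc 1 (N + 1) = insert 1 (Icc 2 (N + 1)) := by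
    ext x; simp [mem_Icc]; omega
  rw [hins, Finset.sum_insert (by simp), if_pos rfl]
  rw [Finset.sum_congr rfl (fun s hs => by
    simp only [mem_Icc] at hs
    rw [if_neg (by omega)]), Finset.sum_const, Nat.card_Icc,
    show N + 1 + 1 - 2 = N by omega, nsmul_eq_mul]
  field_simp
  ring

lemma ite_forall_prod {D : ℕ} (P : Fin D → Prop) [∀ d, Decidable (P d)] (h : Fin D → ℝ) :
    (if ∀ d, P d then ∏ d, h d else 0) = ∏ d, (if P d then h d else 0) := by
  by_cases hc : ∀ d, P d
  · rw [if_pos hc]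
    exact Finset.prod_congr rfl (fun d _ => (if_pos (hc d)).symm)
  · rw [if_neg hc]
    push_neg at hc
    obtain ⟨d0, hd0⟩ := hc
    exact (Finset.prod_eq_zero (Finset.mem_univ d0)
      (if_neg hd0 : (if P d0 then h d0 else 0) = 0)).symm

end Helpers
/-- Proposition 3, multi-dimensional version: `Y` has sizes `M_d` (`M_d = N_d` for
`d ≠ d'`, `M_{d'} = N_{d'}+1`), and `X ⊆ Y` agrees in all dimensions `d ≠ d'` and, in
dimension `d'`, consists of the first (`initial = true`) or last (`initial = false`)
`N_{d'}` positions.  A candidate patch on `Y` is restricted coordinatewise to `X`: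
in dimension `d ≠ d'` the restriction is the identity (nonempty iff `l_d ≥ 1`); in
dimension `d'`, for the initial-boundary case the restriction is
`(s, min l (N_{d'}−s+1))` (nonempty iff `l ≥ 1 ∧ s ≤ N_{d'}`), and for the
terminal-boundary case it is `(max s 2 − 1, s + l − max s 2)` (nonempty iff
`l ≥ 1 ∧ s + l − 1 ≥ 2`).  Then for every admissible target patch `g` on `X`:
`P_Y(π⁻¹(g) | restriction nonempty in every dimension) = P_X(g | all side-lengths positive)`. -/
theorem spp_position_self_consistent_multidim (θ : ℝ) (hθ0 : 0 ≤ θ) (hθ1 : θ ≤ 1)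
    (D : ℕ) (hD : 0 < D) (N : Fin D → ℕ) (hN : ∀ d, 0 < N d)
    (d' : Fin D) (initial : Bool) (M : Fin D → ℕ)
    (hM : ∀ d, M d = if d = d' then N d + 1 else N d)
    (g : Fin D → ℕ × ℕ)
    (hg : ∀ d, 1 ≤ (g d).1 ∧ (g d).1 ≤ N d ∧ 1 ≤ (g d).2 ∧ (g d).2 ≤ N d - (g d).1 + 1) :
    (∑ f ∈ Fintype.piFinset (fun d => Finset.Icc 1 (M d) ×ˢ Finset.Icc 0 (M d)),
        if (∀ d, 1 ≤ (f d).2 ∧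
              (d = d' → if initial then (f d).1 ≤ N d' else 2 ≤ (f d).1 + (f d).2 - 1)) ∧
           (∀ d, if d = d' then
                (if initial then
                    (f d).1 = (g d).1 ∧ min (f d).2 (N d - (f d).1 + 1) = (g d).2
                  else
                    max (f d).1 2 - 1 = (g d).1 ∧
                      (f d).1 + (f d).2 - max (f d).1 2 = (g d).2)
              else f d = g d) then
          ∏ d, origP θ (M d) (f d)
        else 0) /
    (∑ f ∈ Fintype.piFinset (fun d => Finset.Icc 1 (M d) ×ˢ Finset.Icc 0 (M d)),
        if (∀ d, 1 ≤ (f d).2 ∧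
              (d = d' → if initial then (f d).1 ≤ N d' else 2 ≤ (f d).1 + (f d).2 - 1)) then
          ∏ d, origP θ (M d) (f d)
        else 0)
      = (∏ d, origP θ (N d) (g d)) /
        (∑ f ∈ Fintype.piFinset (fun d => Finset.Icc 1 (N d) ×ˢ Finset.Icc 1 (N d)),
          ∏ d, origP θ (N d) (f d)) := by
  have hκ : ((N d' : ℝ) / ((N d' : ℝ) + 1)) ≠ 0 := by
    have h1 : (0 : ℝ) < (N d' : ℝ) := by exact_mod_cast hN d'
    positivity
  -- per-dimension evaluation of the numerator factors
  have step2 : ∀ d : Fin D,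
      (∑ p ∈ Finset.Icc 1 (M d) ×ˢ Finset.Icc 0 (M d),
        if (1 ≤ p.2 ∧
              (d = d' → if initial then p.1 ≤ N d' else 2 ≤ p.1 + p.2 - 1)) ∧
           (if d = d' then
                (if initial then
                    p.1 = (g d).1 ∧ min p.2 (N d - p.1 + 1) = (g d).2
                  else
                    max p.1 2 - 1 = (g d).1 ∧
                      p.1 + p.2 - max p.1 2 = (g d).2)
              else p = g d) then origP θ (M d) p else 0)
      = (if d = d' then ((N d' : ℝ) / ((N d' : ℝ) + 1)) else 1) * origP θ (N d) (g d) := by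
    intro d
    by_cases hd : d = d'
    · subst hd
      have hMd : M d = N d + 1 := by rw [hM d, if_pos rfl]
      rw [hMd]
      cases initial
      · simp only [eq_self_iff_true, if_true, true_implies, Bool.false_eq_true, if_false]
        exact (numTerm θ (hg d).1 (hg d).2.1 (hg d).2.2.1 (hg d).2.2.2).trans
          (by rw [Prod.mk.eta])
      · simp only [eq_self_iff_true, if_true, true_implies]
        exact (numInit θ (hg d).1 (hg d).2.1 (hg d).2.2.1 (hg d).2.2.2).trans
          (by rw [Prod.mk.eta])
    · have hMd : M d = N d := by rw [hM d, if_neg hd]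
      rw [hMd]
      simp only [hd, if_false, false_implies, and_true]
      rw [one_mul]
      exact single θ (g d) (hg d)
  -- per-dimension evaluation of the denominator factors
  have step2den : ∀ d : Fin D,
      (∑ p ∈ Finset.Icc 1 (M d) ×ˢ Finset.Icc 0 (M d),
        if 1 ≤ p.2 ∧
              (d = d' → if initial then p.1 ≤ N d' else 2 ≤ p.1 + p.2 - 1)
          then origP θ (M d) p else 0)
      = (if d = d' then ((N d' : ℝ) / ((N d' : ℝ) + 1)) else 1) * T θ (N d) := by
    intro d
    by_cases hd : d = d'
    · subst hd
      have hMd : M d = N d + 1 := by rw [hM d, if_pos rfl]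
      have hNd : (0 : ℝ) < (N d : ℝ) := by exact_mod_cast hN d
      rw [hMd, if_pos rfl, T_eq θ (hN d)]
      cases initial
      · simp only [eq_self_iff_true, if_true, true_implies, Bool.false_eq_true, if_false]
        rw [denTerm θ (hN d)]
        field_simp
      · simp only [eq_self_iff_true, if_true, true_implies]
        rw [denInit θ (hN d)]
        field_simp
    · have hMd : M d = N d := by rw [hM d, if_neg hd]
      rw [hMd]
      simp only [hd, if_false, false_implies, and_true]
      rw [one_mul]
      exact den_nonbd θ
  -- numerator
  have hnum : (∑ f ∈ Fintype.piFinset (fun d => Finset.Icc 1 (M d) ×ˢ Finset.Icc 0 (M d)),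
        if (∀ d, 1 ≤ (f d).2 ∧
              (d = d' → if initial then (f d).1 ≤ N d' else 2 ≤ (f d).1 + (f d).2 - 1)) ∧
           (∀ d, if d = d' then
                (if initial then
                    (f d).1 = (g d).1 ∧ min (f d).2 (N d - (f d).1 + 1) = (g d).2
                  else
                    max (f d).1 2 - 1 = (g d).1 ∧
                      (f d).1 + (f d).2 - max (f d).1 2 = (g d).2)
              else f d = g d) then
          ∏ d, origP θ (M d) (f d)
        else 0)
      = ((N d' : ℝ) / ((N d' : ℝ) + 1)) * ∏ d, origP θ (N d) (g d) := by
    trans (∏ d : Fin D, ∑ p ∈ Finset.Icc 1 (M d) ×ˢ Finset.Icc 0 (M d),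
        if (1 ≤ p.2 ∧
              (d = d' → if initial then p.1 ≤ N d' else 2 ≤ p.1 + p.2 - 1)) ∧
           (if d = d' then
                (if initial then
                    p.1 = (g d).1 ∧ min p.2 (N d - p.1 + 1) = (g d).2
                  else
                    max p.1 2 - 1 = (g d).1 ∧
                      p.1 + p.2 - max p.1 2 = (g d).2)
              else p = g d) then origP θ (M d) p else 0)
    · rw [Finset.prod_univ_sum]
      refine Finset.sum_congr rfl (fun f _ => ?_)
      exact (if_congr (Iff.symm forall_and) rfl rfl).trans (ite_forall_prod _ _)
    · rw [Finset.prod_congr rfl (fun d _ => step2 d), Finset.prod_mul_distrib,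
        Finset.prod_ite_eq' Finset.univ d'
          (fun _ => ((N d' : ℝ) / ((N d' : ℝ) + 1))),
        if_pos (Finset.mem_univ d')]
  -- denominator
  have hden : (∑ f ∈ Fintype.piFinset (fun d => Finset.Icc 1 (M d) ×ˢ Finset.Icc 0 (M d)),
        if (∀ d, 1 ≤ (f d).2 ∧
              (d = d' → if initial then (f d).1 ≤ N d' else 2 ≤ (f d).1 + (f d).2 - 1)) then
          ∏ d, origP θ (M d) (f d)
        else 0)
      = ((N d' : ℝ) / ((N d' : ℝ) + 1)) * ∏ d, T θ (N d) := by
    trans (∏ d : Fin D, ∑ p ∈ Finset.Icc 1 (M d) ×ˢ Finset.Icc 0 (M d),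
        if 1 ≤ p.2 ∧
              (d = d' → if initial then p.1 ≤ N d' else 2 ≤ p.1 + p.2 - 1)
          then origP θ (M d) p else 0)
    · rw [Finset.prod_univ_sum]
      exact Finset.sum_congr rfl (fun f _ => ite_forall_prod _ _)
    · rw [Finset.prod_congr rfl (fun d _ => step2den d), Finset.prod_mul_distrib,
        Finset.prod_ite_eq' Finset.univ d'
          (fun _ => ((N d' : ℝ) / ((N d' : ℝ) + 1))),
        if_pos (Finset.mem_univ d')]
  have hrhs : (∑ f ∈ Fintype.piFinset (fun d => Finset.Icc 1 (N d) ×ˢ Finset.Icc 1 (N d)),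
        ∏ d, origP θ (N d) (f d)) = ∏ d, T θ (N d) :=
    (Finset.prod_univ_sum _ _).symm
  rw [hnum, hden, hrhs]
  exact mul_div_mul_left _ _ hκ
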